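/- Let x be irrational and let A ⊆ ℕ be such that x∗A = {x·a mod 1 : a ∈ A} is well-ordered by the usual order on ℝ. Then A has natural density 0, i.e., |A ∩ [0,n)|/n → 0 as n → ∞. -/

import Mathlib

set_option maxHeartbeats 1000000

lemma diam_card_le (s : Finset ℕ) (D : ℕ) (h : ∀ a ∈ s, ∀ b ∈ s, a ≤ b → b - a ≤ D) :
    s.card ≤ D + 1 := by
  rcases s.eq_empty_or_nonempty with rfl | hs
  · simp
  · have hmin := s.min'_mem hs
    have hsub : s ⊆ Finset.Icc (s.min' hs) (s.min' hs + D) := by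
      intro a ha
      simp only [Finset.mem_Icc]
      refine ⟨s.min'_le a ha, ?_⟩
      have := h _ hmin _ ha (s.min'_le a ha)
      omega
    calc s.card ≤ _ := Finset.card_le_card hsub
    _ = D + 1 := by rw [Nat.card_Icc]; omega

lemma floor_helper {w α ℓ : ℝ} (hℓ : ℓ ≤ 1) (h1 : α < Int.fract w) (h2 : Int.fract w < α + ℓ) :
    0 < w - α - ⌊w - α⌋ ∧ w - α - ⌊w - α⌋ < ℓ := by
  simp only [Int.fract] at h1 h2
  have e : ⌊w - α⌋ = ⌊w⌋ := by
    rw [Int.floor_eq_iff]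
    refine ⟨by push_cast; linarith, by push_cast; linarith⟩
  rw [e]
  constructor <;> linarith

lemma count_visits (x : ℝ) (hx : Irrational x) (α ℓ : ℝ) (hℓ : 0 < ℓ) :
    ∃ C : ℝ, ∀ n : ℕ,
      (((Finset.range n).filter
          (fun a : ℕ => α < Int.fract (x * a) ∧ Int.fract (x * a) < α + ℓ)).card : ℝ)
        ≤ 4 * ℓ * n + C := by
  by_cases hℓ1 : 1/4 ≤ ℓ
  · refine ⟨0, fun n => ?_⟩
    have h1 : (((Finset.range n).filter
        (fun a : ℕ => α < Int.fract (x * a) ∧ Int.fract (x * a) < α + ℓ)).card : ℝ) ≤ n := by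
      exact_mod_cast le_trans (Finset.card_filter_le _ _) (le_of_eq (Finset.card_range n))
    have hn : (0:ℝ) ≤ n := Nat.cast_nonneg n
    nlinarith
  push_neg at hℓ1
  set N : ℕ := ⌈2/ℓ⌉₊ with hN
  have hNpos : 0 < N := Nat.ceil_pos.mpr (by positivity)
  obtain ⟨j, k, hk0, hkN, hjk⟩ := Real.exists_int_int_abs_mul_sub_le x hNpos
  set q : ℕ := k.toNat with hq
  have hkq : (q : ℤ) = k := Int.toNat_of_nonneg hk0.le
  have hq0 : 0 < q := by omega
  have hqR : (0:ℝ) < q := by exact_mod_cast hq0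
  set δ : ℝ := q * x - j with hδ
  have hδk : δ = (k:ℝ) * x - j := by rw [hδ, ← hkq]; push_cast; ring
  have hδℓ : |δ| ≤ ℓ / 2 := by
    rw [hδk]
    refine hjk.trans ?_
    rw [div_le_div_iff₀ (by positivity) (by norm_num)]
    have h2 : 2/ℓ ≤ N := Nat.le_ceil _
    rw [div_le_iff₀ hℓ] at h2
    nlinarith
  have hδ0 : δ ≠ 0 := by
    intro h0
    have h1 : ((q:ℤ):ℝ) * x = ((j:ℤ):ℝ) := by push_cast; rw [hδ] at h0; linarith
    exact (hx.intCast_mul (by omega : (q:ℤ) ≠ 0)).ne_int j (by exact_mod_cast h1)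
  have hδpos : 0 < |δ| := abs_pos.mpr hδ0
  have key : ∀ a : ℕ, Int.fract (x * a)
      = Int.fract (δ * ((a / q : ℕ) : ℝ) + x * ((a % q : ℕ) : ℝ)) := by
    intro a
    have ha : (q : ℝ) * ((a / q : ℕ) : ℝ) + ((a % q : ℕ) : ℝ) = a := by
      exact_mod_cast Nat.div_add_mod a q
    have h2 : x * a = (δ * ((a / q : ℕ) : ℝ) + x * ((a % q : ℕ) : ℝ))
        + ((j * ((a / q : ℕ) : ℤ) : ℤ) : ℝ) := by
      rw [Int.cast_mul, Int.cast_natCast, hδ]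
      linear_combination (-x) * ha
    rw [h2, Int.fract_add_intCast]
  clear_value N q δ
  set D : ℕ := ⌊ℓ / |δ|⌋₊ with hD
  refine ⟨(ℓ / |δ| + 1) * (q * (2 * |x| * q + 2 * |α| + 5)), fun n => ?_⟩
  set Φ : ℕ → ℕ × ℤ :=
    fun a => (a % q, ⌊δ * ((a / q : ℕ) : ℝ) + x * ((a % q : ℕ) : ℝ) - α⌋) with hΦ
  set E : Finset ℕ := (Finset.range n).filter
      (fun a : ℕ => α < Int.fract (x * a) ∧ Int.fract (x * a) < α + ℓ) with hE
  have hfl : ∀ a ∈ E,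
      0 < δ * ((a / q : ℕ) : ℝ) + x * ((a % q : ℕ) : ℝ) - α - (Φ a).2
      ∧ δ * ((a / q : ℕ) : ℝ) + x * ((a % q : ℕ) : ℝ) - α - (Φ a).2 < ℓ := by
    intro a ha
    rw [hE, Finset.mem_filter] at ha
    obtain ⟨-, h1, h2⟩ := ha
    rw [key a] at h1 h2
    exact floor_helper (by linarith) h1 h2
  -- fiber bound
  have hfib : ∀ p ∈ E.image Φ, (E.filter (fun a => Φ a = p)).card ≤ D + 1 := by
    intro p _
    set s : Finset ℕ := E.filter (fun a => Φ a = p) with hs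
    have hmod : ∀ a ∈ s, a % q = p.1 ∧ (Φ a).2 = p.2 := by
      intro a ha
      rw [hs, Finset.mem_filter] at ha
      have := ha.2
      rw [hΦ] at this
      exact ⟨congrArg Prod.fst this, congrArg Prod.snd this⟩
    have hinj : Set.InjOn (· / q) ↑s := by
      intro a ha b hb hab
      have h1 := (hmod a ha).1
      have h2 := (hmod b hb).1
      have e1 := Nat.div_add_mod a q
      have e2 := Nat.div_add_mod b q
      have h3 : a % q = b % q := h1.trans h2.symm
      have hab' : a / q = b / q := hab
      calc a = q * (a / q) + a % q := (Nat.div_add_mod a q).symm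
      _ = q * (b / q) + b % q := by rw [hab', h3]
      _ = b := Nat.div_add_mod b q
    rw [← Finset.card_image_of_injOn hinj]
    refine diam_card_le _ D ?_
    intro u hu v hv huv
    obtain ⟨a, ha, rfl⟩ := Finset.mem_image.mp hu
    obtain ⟨b, hb, rfl⟩ := Finset.mem_image.mp hv
    have ha' : a ∈ E := (Finset.mem_filter.mp (hs ▸ ha)).1
    have hb' : b ∈ E := (Finset.mem_filter.mp (hs ▸ hb)).1
    have f1 := hfl a ha'
    have f2 := hfl b hb'
    rw [(hmod a ha).2] at f1
    rw [(hmod b hb).2] at f2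
    have hr : ((a % q : ℕ) : ℝ) = ((b % q : ℕ) : ℝ) := by
      rw [(hmod a ha).1, (hmod b hb).1]
    rw [← hr] at f2
    have hd : |δ| * (((b / q : ℕ) : ℝ) - ((a / q : ℕ) : ℝ)) < ℓ := by
      have h12 : δ * (((b / q : ℕ) : ℝ) - ((a / q : ℕ) : ℝ)) < ℓ
          ∧ -(δ * (((b / q : ℕ) : ℝ) - ((a / q : ℕ) : ℝ))) < ℓ := by
        constructor <;> nlinarith [f1.1, f1.2, f2.1, f2.2]
      rcases abs_cases δ with h | h
      · rw [h.1]; nlinarith [h12.1]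
      · rw [h.1]; nlinarith [h12.2]
    rw [hD]
    refine Nat.le_floor ?_
    have hcast : ((b / q - a / q : ℕ) : ℝ) = ((b / q : ℕ) : ℝ) - ((a / q : ℕ) : ℝ) := by
      have : a / q ≤ b / q := huv
      push_cast [Nat.cast_sub this]
      ring
    rw [hcast, le_div_iff₀ hδpos]
    nlinarith [hd]
  set M : ℝ := |δ| * ((n:ℝ)/q) + |x| * q + |α| with hM
  set K : ℤ := ⌈M⌉ + 1 with hK
  have hM0 : (0:ℝ) ≤ M := by rw [hM]; positivity
  have hK1 : (1:ℤ) ≤ K := by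
    have : (0:ℤ) ≤ ⌈M⌉ := Int.ceil_nonneg hM0
    omega
  have hceilM : M ≤ ((⌈M⌉ : ℤ) : ℝ) := Int.le_ceil M
  have hceilM' : ((⌈M⌉ : ℤ) : ℝ) < M + 1 := Int.ceil_lt_add_one M
  clear_value M
  have himg : E.image Φ ⊆ (Finset.range q) ×ˢ (Finset.Icc (-K) K) := by
    intro p hp
    obtain ⟨a, ha, rfl⟩ := Finset.mem_image.mp hp
    have han : a < n := Finset.mem_range.mp (Finset.mem_filter.mp (hE ▸ ha)).1
    rw [Finset.mem_product]
    refine ⟨Finset.mem_range.mpr (Nat.mod_lt a hq0), ?_⟩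
    have ht : ((a / q : ℕ) : ℝ) ≤ (n:ℝ)/q := by
      calc ((a / q : ℕ) : ℝ) ≤ ((n / q : ℕ) : ℝ) := by
            exact_mod_cast Nat.div_le_div_right han.le
      _ ≤ (n:ℝ)/q := Nat.cast_div_le
    have ht0 : (0:ℝ) ≤ ((a / q : ℕ) : ℝ) := Nat.cast_nonneg _
    have hrq : ((a % q : ℕ) : ℝ) ≤ q := by
      exact_mod_cast (Nat.mod_lt a hq0).le
    have hr0 : (0:ℝ) ≤ ((a % q : ℕ) : ℝ) := Nat.cast_nonneg _
    have h1 : |δ * ((a / q : ℕ) : ℝ)| ≤ |δ| * ((n:ℝ)/q) := by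
      rw [abs_mul, abs_of_nonneg ht0]
      exact mul_le_mul_of_nonneg_left ht (abs_nonneg δ)
    have h2 : |x * ((a % q : ℕ) : ℝ)| ≤ |x| * q := by
      rw [abs_mul, abs_of_nonneg hr0]
      exact mul_le_mul_of_nonneg_left hrq (abs_nonneg x)
    have habs : |δ * ((a / q : ℕ) : ℝ) + x * ((a % q : ℕ) : ℝ) - α| ≤ M := by
      have h1' := abs_le.mp h1
      have h2' := abs_le.mp h2
      have ha1 := le_abs_self α
      have ha2 := neg_abs_le α
      rw [hM]
      refine abs_le.mpr ⟨by linarith, by linarith⟩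
    have habs' := abs_le.mp habs
    simp only [hΦ]
    refine Finset.mem_Icc.mpr ⟨?_, ?_⟩
    · refine Int.le_floor.mpr ?_
      have hceil := hceilM
      have hcast : (((-K) : ℤ) : ℝ) = -(((⌈M⌉ : ℤ) : ℝ) + 1) := by
        rw [hK]; push_cast; ring
      rw [hcast]
      linarith [habs'.1, hceil]
    · have hfloor := Int.floor_le (δ * ((a / q : ℕ) : ℝ) + x * ((a % q : ℕ) : ℝ) - α)
      have hceil := hceilM
      have : ((⌊δ * ((a / q : ℕ) : ℝ) + x * ((a % q : ℕ) : ℝ) - α⌋ : ℤ) : ℝ) ≤ ((K : ℤ) : ℝ) := by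
        have hcast : ((K : ℤ) : ℝ) = ((⌈M⌉ : ℤ) : ℝ) + 1 := by
          rw [hK]; push_cast; ring
        rw [hcast]
        linarith [habs'.2, hfloor, hceil]
      exact_mod_cast this
  have hcard1 : E.card ≤ (D + 1) * (E.image Φ).card :=
    Finset.card_le_mul_card_image E (D+1) hfib
  have hcard2 : (E.image Φ).card ≤ q * (2*K+1).toNat := by
    refine (Finset.card_le_card himg).trans ?_
    rw [Finset.card_product, Finset.card_range, Int.card_Icc]
    have h4 : K + 1 - -K = 2*K+1 := by ring
    rw [h4]
  have hIcc : (((2*K+1).toNat : ℕ) : ℝ) ≤ 2*M + 5 := by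
    have h0 : (0:ℤ) ≤ 2*K+1 := by omega
    have h5 : (((2*K+1).toNat : ℕ) : ℝ) = ((2*K+1 : ℤ) : ℝ) := by
      exact_mod_cast congrArg (Int.cast : ℤ → ℝ) (Int.toNat_of_nonneg h0)
    rw [h5, hK]
    push_cast
    linarith [hceilM']
  have c1 : (E.card : ℝ) ≤ ((D:ℝ)+1) * ((E.image Φ).card : ℝ) := by exact_mod_cast hcard1
  have c2 : ((E.image Φ).card : ℝ) ≤ (q : ℝ) * (2*M+5) := by
    have h6 : ((E.image Φ).card : ℝ) ≤ ((q * (2*K+1).toNat : ℕ) : ℝ) := by exact_mod_cast hcard2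
    refine h6.trans ?_
    push_cast
    exact mul_le_mul_of_nonneg_left hIcc (by positivity)
  have c3 : (E.card : ℝ) ≤ ((D:ℝ)+1) * ((q:ℝ) * (2*M+5)) :=
    c1.trans (mul_le_mul_of_nonneg_left c2 (by positivity))
  have expand : (q:ℝ) * (2*M+5) = 2 * |δ| * n + (q:ℝ) * (2 * |x| * q + 2 * |α| + 5) := by
    rw [hM]
    field_simp
    ring
  rw [expand] at c3
  have hDle : (D : ℝ) ≤ ℓ / |δ| := by
    rw [hD]
    exact Nat.floor_le (by positivity)
  have hn0 : (0:ℝ) ≤ n := Nat.cast_nonneg n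
  have hC0 : (0:ℝ) ≤ (q:ℝ) * (2 * |x| * q + 2 * |α| + 5) := by positivity
  have c4 : (E.card : ℝ) ≤ (ℓ/|δ| + 1) * (2 * |δ| * n + (q:ℝ) * (2 * |x| * q + 2 * |α| + 5)) := by
    refine c3.trans (mul_le_mul_of_nonneg_right (by linarith) ?_)
    positivity
  have e1 : (ℓ/|δ| + 1) * (2 * |δ| * n + (q:ℝ) * (2 * |x| * q + 2 * |α| + 5))
      = 2*ℓ*n + 2 * |δ| * n + (ℓ/|δ| + 1) * ((q:ℝ) * (2 * |x| * q + 2 * |α| + 5)) := by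
    field_simp
  rw [e1] at c4
  have e2 : 2 * |δ| * n ≤ ℓ * n := by
    have : 2 * |δ| ≤ ℓ := by linarith
    nlinarith
  refine c4.trans ?_
  nlinarith

/-- If `x` is irrational and `x∗A` is well-ordered by the usual order on `ℝ`,
then `A` has natural density `0`. -/
theorem stmt_11 (x : ℝ) (hx : Irrational x) (A : Set ℕ)
    (hWF : ((fun a : ℕ => Int.fract (x * a)) '' A).IsWF) :
    Filter.Tendsto (fun n : ℕ => ((A ∩ Set.Iio n).ncard : ℝ) / n)
      Filter.atTop (nhds 0) := by
  classical
  by_cases hA : A = ∅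
  · subst hA
    have : ∀ n : ℕ, ((∅ ∩ Set.Iio n : Set ℕ).ncard : ℝ) / n = 0 := by
      intro n; simp
    simp only [this]
    exact tendsto_const_nhds
  set S : Set ℝ := (fun a : ℕ => Int.fract (x * a)) '' A with hS
  set T : Set ℝ := closure S with hT
  have hST : S ⊆ T := subset_closure
  have hSIcc : S ⊆ Set.Icc 0 1 := by
    rintro - ⟨a, -, rfl⟩
    exact ⟨Int.fract_nonneg _, (Int.fract_lt_one _).le⟩
  have hTcomp : IsCompact T := isCompact_Icc.of_isClosed_subset isClosed_closure
    (closure_minimal hSIcc isClosed_Icc)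
  have hTne : T.Nonempty := by
    obtain ⟨a, ha⟩ := Set.nonempty_iff_ne_empty.mpr hA
    exact ⟨_, hST ⟨a, ha, rfl⟩⟩
  -- gap lemma
  have gapS : ∀ t : ℝ, ∃ ε : ℝ, 0 < ε ∧ ∀ u ∈ S, u ∉ Set.Ioo t (t + ε) := by
    intro t
    have hBWF : (S ∩ Set.Ioi t).IsWF := hWF.mono Set.inter_subset_left
    by_cases hB : (S ∩ Set.Ioi t).Nonempty
    · refine ⟨hBWF.min hB - t, ?_, ?_⟩
      · have := hBWF.min_mem hB
        have : t < hBWF.min hB := this.2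
        linarith
      · intro u hu ⟨h1, h2⟩
        have humem : u ∈ S ∩ Set.Ioi t := ⟨hu, h1⟩
        exact hBWF.not_lt_min hB humem (by linarith)
    · refine ⟨1, one_pos, fun u hu ⟨h1, _⟩ => hB ⟨u, hu, h1⟩⟩
  have gapT : ∀ t : ℝ, ∃ ε : ℝ, 0 < ε ∧ ∀ u ∈ T, u ∉ Set.Ioo t (t + ε) := by
    intro t
    obtain ⟨ε, hε, h⟩ := gapS t
    refine ⟨ε, hε, fun u hu hmem => ?_⟩
    rw [hT, mem_closure_iff] at hu
    obtain ⟨v, hv1, hv2⟩ := hu (Set.Ioo t (t + ε)) isOpen_Ioo hmem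
    exact h v hv2 hv1
  choose εg hεg hgap using gapT
  -- countability of T
  have hTcount : T.Countable := by
    have hrat : ∀ t : ℝ, ∃ r : ℚ, t < (r : ℝ) ∧ (r : ℝ) < t + εg t :=
      fun t => exists_rat_btwn (by linarith [hεg t])
    choose f hf1 hf2 using hrat
    refine Set.MapsTo.countable_of_injOn (Set.mapsTo_univ f T) ?_ Set.countable_univ
    intro s hsT u huT hsu
    by_contra hne
    have key : ∀ a b : ℝ, a ∈ T → b ∈ T → a < b → f a ≠ f b := by
      intro a b haT hbT hab hfab
      have h1 : b ∉ Set.Ioo a (a + εg a) := hgap a b hbT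
      have h2 : a + εg a ≤ b := by
        by_contra hc
        push_neg at hc
        exact h1 ⟨hab, hc⟩
      have c1 := hf1 a
      have c2 := hf2 a
      have c3 := hf1 b
      have : ((f a : ℚ) : ℝ) = ((f b : ℚ) : ℝ) := by exact_mod_cast hfab
      linarith
    rcases lt_or_gt_of_ne hne with h | h
    · exact key s u hsT huT h hsu
    · exact key u s huT hsT h hsu.symm
  obtain ⟨g, hg⟩ := hTcount.exists_eq_range hTne
  -- main estimate
  rw [Metric.tendsto_nhds]
  intro ε hε
  set ε' : ℝ := ε / 100 with hε'
  have hε'0 : 0 < ε' := by rw [hε']; positivity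
  -- cover T by intervals around g i of radius ε'/2^(i+1)
  set J : ℕ → Set ℝ := fun i => Set.Ioo (g i - ε' / 2 ^ (i + 1)) (g i + ε' / 2 ^ (i + 1)) with hJ
  have hcov : T ⊆ ⋃ i, J i := by
    intro t ht
    rw [hg] at ht
    obtain ⟨i, rfl⟩ := ht
    refine Set.mem_iUnion.mpr ⟨i, ?_, ?_⟩ <;>
      · have : (0:ℝ) < ε' / 2 ^ (i + 1) := by positivity
        linarith
  obtain ⟨F, hF⟩ := hTcomp.elim_finite_subcover J (fun i => isOpen_Ioo) hcov
  have hvis := fun i : ℕ => count_visits x hx (g i - ε' / 2 ^ (i + 1)) (ε' / 2 ^ i)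
    (by positivity)
  choose C hC using hvis
  set CF : ℝ := ∑ i ∈ F, max (C i) 0 with hCF
  have hCF0 : 0 ≤ CF := Finset.sum_nonneg fun i _ => le_max_right _ _
  -- the endpoint identity
  have hαℓ : ∀ i : ℕ, g i - ε' / 2 ^ (i + 1) + ε' / 2 ^ i = g i + ε' / 2 ^ (i + 1) := by
    intro i
    have h2 : (2:ℝ) ^ (i + 1) = 2 ^ i * 2 := pow_succ 2 i
    field_simp
    ring
  -- cardinality comparison for each n
  have hcard : ∀ n : ℕ, ((A ∩ Set.Iio n).ncard : ℝ) ≤ 8 * ε' * n + CF := by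
    intro n
    have hset : A ∩ Set.Iio n = ↑((Finset.range n).filter (fun a => a ∈ A)) := by
      ext a
      simp [Set.mem_Iio, and_comm]
    rw [hset, Set.ncard_coe_finset]
    have hsub : (Finset.range n).filter (fun a => a ∈ A) ⊆
        F.biUnion (fun i => (Finset.range n).filter
          (fun a : ℕ => g i - ε' / 2 ^ (i + 1) < Int.fract (x * a) ∧
            Int.fract (x * a) < g i - ε' / 2 ^ (i + 1) + ε' / 2 ^ i)) := by
      intro a ha
      rw [Finset.mem_filter] at ha
      have hfr : Int.fract (x * a) ∈ T := hST ⟨a, ha.2, rfl⟩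
      have := hF hfr
      rw [Set.mem_iUnion₂] at this
      obtain ⟨i, hiF, hmem⟩ := this
      rw [hJ] at hmem
      refine Finset.mem_biUnion.mpr ⟨i, hiF, Finset.mem_filter.mpr ⟨ha.1, hmem.1, ?_⟩⟩
      rw [hαℓ i]
      exact hmem.2
    have h1 : ((Finset.range n).filter (fun a => a ∈ A)).card ≤
        ∑ i ∈ F, ((Finset.range n).filter
          (fun a : ℕ => g i - ε' / 2 ^ (i + 1) < Int.fract (x * a) ∧
            Int.fract (x * a) < g i - ε' / 2 ^ (i + 1) + ε' / 2 ^ i)).card :=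
      (Finset.card_le_card hsub).trans (Finset.card_biUnion_le)
    have h2 : (((Finset.range n).filter (fun a => a ∈ A)).card : ℝ) ≤
        ∑ i ∈ F, (4 * (ε' / 2 ^ i) * n + max (C i) 0) := by
      calc (((Finset.range n).filter (fun a => a ∈ A)).card : ℝ)
          ≤ ∑ i ∈ F, (((Finset.range n).filter
            (fun a : ℕ => g i - ε' / 2 ^ (i + 1) < Int.fract (x * a) ∧
              Int.fract (x * a) < g i - ε' / 2 ^ (i + 1) + ε' / 2 ^ i)).card : ℝ) := by
            exact_mod_cast h1
      _ ≤ ∑ i ∈ F, (4 * (ε' / 2 ^ i) * n + max (C i) 0) := by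
            refine Finset.sum_le_sum fun i _ => ?_
            exact (hC i n).trans (by linarith [le_max_left (C i) 0])
    refine h2.trans ?_
    rw [Finset.sum_add_distrib, ← hCF]
    have h3 : ∑ i ∈ F, 4 * (ε' / 2 ^ i) * (n:ℝ) ≤ 8 * ε' * n := by
      have h4 : ∑ i ∈ F, 4 * (ε' / 2 ^ i) * (n:ℝ) = (4 * ε' * n) * ∑ i ∈ F, (1/(2:ℝ)) ^ i := by
        rw [Finset.mul_sum]
        refine Finset.sum_congr rfl fun i _ => ?_
        rw [div_pow, one_pow]
        ring
      rw [h4]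
      have h5 : ∑ i ∈ F, (1/(2:ℝ)) ^ i ≤ 2 := by
        refine le_trans (Finset.sum_le_sum_of_subset_of_nonneg
          (fun i hi => Finset.mem_range.mpr (Nat.lt_succ_of_le (Finset.le_sup (f := id) hi)))
          (fun i _ _ => by positivity)) ?_
        exact sum_geometric_two_le _
      nlinarith [mul_nonneg (mul_nonneg (by norm_num : (0:ℝ) ≤ 4) hε'0.le) (Nat.cast_nonneg n)]
    linarith
  -- conclude
  have hN : ∃ N : ℕ, 1 ≤ N ∧ (2 * CF / ε : ℝ) < N := by
    obtain ⟨N, hN⟩ := exists_nat_gt (max 1 (2 * CF / ε))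
    exact ⟨N, by
      have := le_max_left 1 (2 * CF / ε)
      have h2 := le_max_right 1 (2 * CF / ε)
      constructor
      · exact_mod_cast le_of_lt (lt_of_le_of_lt this hN)
      · exact lt_of_le_of_lt h2 hN⟩
  obtain ⟨N, hN1, hN2⟩ := hN
  rw [Filter.eventually_atTop]
  refine ⟨N, fun n hn => ?_⟩
  have hn1 : (1:ℝ) ≤ n := by exact_mod_cast hN1.trans hn
  have hn0 : (0:ℝ) < n := by linarith
  have hfn : ((A ∩ Set.Iio n).ncard : ℝ) / n ≤ 8 * ε' + CF / n := by
    rw [div_le_iff₀ hn0]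
    have heq : (8 * ε' + CF / n) * n = 8 * ε' * n + CF := by field_simp
    rw [heq]
    exact hcard n
  have hCFn : CF / n < ε / 2 := by
    have hnn : (2 * CF / ε : ℝ) < n := lt_of_lt_of_le hN2 (by exact_mod_cast hn)
    rw [div_lt_iff₀ hε] at hnn
    rw [div_lt_iff₀ hn0]
    nlinarith
  rw [Real.dist_eq, sub_zero, abs_of_nonneg (by positivity)]
  have : (8:ℝ) * ε' = 8 * ε / 100 := by rw [hε']; ring
  calc ((A ∩ Set.Iio n).ncard : ℝ) / n ≤ 8 * ε' + CF / n := hfn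
  _ < 8 * (ε/100) + ε / 2 := by rw [hε'] at *; linarith
  _ < ε := by linarith
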